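/- (Strict ascent.) Let θ, θ' ∈ Θ with Q(θ'|θ) and Q(θ|θ) finite, and suppose the missing-data densities at θ and θ' differ on a set of positive measure, i.e., μ({x ∈ 𝒳 : f_m(θ, x) ≠ f_m(θ', x)}) > 0. Then ℓ(θ') − ℓ(θ) > Q(θ'|θ) − Q(θ|θ); in particular, if additionally Q(θ'|θ) ≥ Q(θ|θ), then ℓ(θ') > ℓ(θ). -/

import Mathlib

open MeasureTheory Real Filter

/-- Strict ascent: if the missing-data densities at θ and θ´ differ on a set of
positive measure then ℓ(θ´) − ℓ(θ) > Q(θ´|θ) − Q(θ|θ); in particular, if also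
Q(θ´|θ) ≥ Q(θ|θ) then ℓ(θ´) > ℓ(θ). -/
theorem em_strict_ascent
    {𝒳 : Type*} [MeasurableSpace 𝒳] (μ : Measure 𝒳) [SigmaFinite μ]
    {Θ : Type*} (f_c : Θ → 𝒳 → ℝ)
    (hpos : ∀ θ x, 0 < f_c θ x)
    (hmeas : ∀ θ, Measurable (f_c θ))
    (hint : ∀ θ, Integrable (f_c θ) μ)
    (L : Θ → ℝ) (hL : ∀ θ, L θ = ∫ x, f_c θ x ∂μ)
    (hLpos : ∀ θ, 0 < L θ)
    (ell : Θ → ℝ) (hell : ∀ θ, ell θ = Real.log (L θ))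
    (f_m : Θ → 𝒳 → ℝ) (hfm : ∀ θ x, f_m θ x = f_c θ x / L θ)
    (Q : Θ → Θ → ℝ) (hQ : ∀ θ' θ, Q θ' θ = ∫ x, Real.log (f_c θ' x) * f_m θ x ∂μ)
    (θ θ' : Θ)
    (hQ1 : Integrable (fun x => Real.log (f_c θ' x) * f_m θ x) μ)
    (hQ2 : Integrable (fun x => Real.log (f_c θ x) * f_m θ x) μ)
    (hdiff : 0 < μ {x | f_m θ x ≠ f_m θ' x}) :
    ell θ' - ell θ > Q θ' θ - Q θ θ ∧
    (Q θ' θ ≥ Q θ θ → ell θ' > ell θ) := by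
  have hp : ∀ x, 0 < f_m θ x := fun x => by
    rw [hfm]; exact div_pos (hpos θ x) (hLpos θ)
  have hq : ∀ x, 0 < f_m θ' x := fun x => by
    rw [hfm]; exact div_pos (hpos θ' x) (hLpos θ')
  have hintp : Integrable (f_m θ) μ := by
    have : f_m θ = fun x => f_c θ x / L θ := funext (hfm θ)
    rw [this]; exact (hint θ).div_const _
  have hintq : Integrable (f_m θ') μ := by
    have : f_m θ' = fun x => f_c θ' x / L θ' := funext (hfm θ')
    rw [this]; exact (hint θ').div_const _
  have hip : ∫ x, f_m θ x ∂μ = 1 := by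
    simp only [hfm, integral_div, ← hL, div_self (hLpos θ).ne']
  have hiq : ∫ x, f_m θ' x ∂μ = 1 := by
    simp only [hfm, integral_div, ← hL, div_self (hLpos θ').ne']
  set e : ℝ := Real.log (L θ') - Real.log (L θ) with he
  -- pointwise identity for the log ratio
  have hlog : ∀ x, f_m θ x * Real.log (f_m θ' x / f_m θ x)
      = Real.log (f_c θ' x) * f_m θ x - Real.log (f_c θ x) * f_m θ x - e * f_m θ x := by
    intro x
    rw [Real.log_div (hq x).ne' (hp x).ne', hfm θ' x, hfm θ x,
      Real.log_div (hpos θ' x).ne' (hLpos θ').ne',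
      Real.log_div (hpos θ x).ne' (hLpos θ).ne']
    ring
  set g : 𝒳 → ℝ := fun x => f_m θ x * Real.log (f_m θ' x / f_m θ x) with hgdef
  have hAB : Integrable (fun x => Real.log (f_c θ' x) * f_m θ x
      - Real.log (f_c θ x) * f_m θ x) μ := hQ1.sub hQ2
  have hC : Integrable (fun x => e * f_m θ x) μ := hintp.const_mul e
  have hg_int : Integrable g μ := by
    have hgeq : g = fun x => (Real.log (f_c θ' x) * f_m θ x - Real.log (f_c θ x) * f_m θ x)
        - e * f_m θ x := by
      funext x; exact hlog x
    rw [hgeq]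
    exact hAB.sub hC
  have hg_val : ∫ x, g x ∂μ = Q θ' θ - Q θ θ - e := by
    have h1 : ∫ x, g x ∂μ = ∫ x, (Real.log (f_c θ' x) * f_m θ x
        - Real.log (f_c θ x) * f_m θ x - e * f_m θ x) ∂μ :=
      integral_congr_ae (Filter.Eventually.of_forall hlog)
    rw [h1, integral_sub hAB hC, integral_sub hQ1 hQ2,
      integral_const_mul, hip, hQ, hQ]; ring
  have hqp_int : Integrable (fun x => f_m θ' x - f_m θ x) μ := hintq.sub hintp
  set h : 𝒳 → ℝ := fun x => (f_m θ' x - f_m θ x) - g x with hhdef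
  have hh_int : Integrable h μ := hqp_int.sub hg_int
  have hh_nonneg : ∀ x, 0 ≤ h x := by
    intro x
    have ht : Real.log (f_m θ' x / f_m θ x) ≤ f_m θ' x / f_m θ x - 1 :=
      Real.log_le_sub_one_of_pos (div_pos (hq x) (hp x))
    have := mul_le_mul_of_nonneg_left ht (hp x).le
    simp only [hhdef, hgdef]
    rw [mul_sub, mul_one, mul_div_cancel₀ _ (hp x).ne'] at this
    linarith
  have hh_pos : ∀ x, f_m θ x ≠ f_m θ' x → 0 < h x := by
    intro x hne
    have hratio : f_m θ' x / f_m θ x ≠ 1 := by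
      intro hcon
      exact hne ((div_eq_one_iff_eq (hp x).ne').mp hcon).symm
    have ht : Real.log (f_m θ' x / f_m θ x) < f_m θ' x / f_m θ x - 1 :=
      Real.log_lt_sub_one_of_pos (div_pos (hq x) (hp x)) hratio
    have := mul_lt_mul_of_pos_left ht (hp x)
    simp only [hhdef, hgdef]
    rw [mul_sub, mul_one, mul_div_cancel₀ _ (hp x).ne'] at this
    linarith
  have hne0 : ¬ (h =ᵐ[μ] 0) := by
    intro hcon
    have hsub : {x | f_m θ x ≠ f_m θ' x} ⊆ {x | h x ≠ 0} := by
      intro x hx; exact (hh_pos x hx).ne'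
    have : μ {x | h x ≠ 0} = 0 := by
      simpa [Filter.EventuallyEq, ae_iff] using hcon
    exact absurd (measure_mono_null hsub this) hdiff.ne'
  have hih_pos : 0 < ∫ x, h x ∂μ := by
    rcases lt_or_eq_of_le (integral_nonneg (f := h) hh_nonneg) with hlt | heq
    · exact hlt
    · exact absurd ((integral_eq_zero_iff_of_nonneg hh_nonneg hh_int).mp heq.symm) hne0
  have hih_val : ∫ x, h x ∂μ = e - (Q θ' θ - Q θ θ) := by
    rw [show (∫ x, h x ∂μ) = ∫ x, ((f_m θ' x - f_m θ x) - g x) ∂μ from rfl,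
      integral_sub hqp_int hg_int, integral_sub hintq hintp, hip, hiq, hg_val]
    ring
  have key : ell θ' - ell θ - (Q θ' θ - Q θ θ) > 0 := by
    rw [hell, hell, ← he, ← hih_val]; exact hih_pos
  constructor
  · linarith
  · intro hge; linarith
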